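/- The rational function F(w¹,w²,w³) = w¹((w¹)²/12 + w²w³/4) + (w³)⁴/768 + (w²)³/(6w³) satisfies the WDVV associativity equations on the domain {w³ ≠ 0} ⊂ ℝ³ with constant metric η given by η₁₁ = 1/2, η₂₃ = η₃₂ = 1/4 and all other entries zero: for all α,β one has ∂₁∂_α∂_β F = η_{αβ}, the matrix η is invertible, and the structure constants c^γ_{αβ} = Σ_ε (η⁻¹)^{γε} ∂_ε∂_α∂_β F satisfy Σ_ε c^ε_{αβ} c^σ_{εγ} = Σ_ε c^ε_{αγ} c^σ_{εβ} for all α,β,γ,σ at every point with w³ ≠ 0. -/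

import Mathlib

set_option maxHeartbeats 1000000

/-- Partial derivative of `f : (Fin N → ℝ) → ℝ` in the `i`-th coordinate direction. -/
noncomputable def pd {N : ℕ} (i : Fin N) (f : (Fin N → ℝ) → ℝ) : (Fin N → ℝ) → ℝ :=
  fun x => fderiv ℝ f x (Pi.single i 1)

/-- The potential. -/
noncomputable def FF : (Fin 3 → ℝ) → ℝ :=
  fun w => w 0 * ((w 0) ^ 2 / 12 + w 1 * w 2 / 4) + (w 2) ^ 4 / 768 + (w 1) ^ 3 / (6 * w 2)

/-- The constant metric. -/
noncomputable def eta : Matrix (Fin 3) (Fin 3) ℝ :=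
  !![1/2, 0, 0; 0, 0, 1/4; 0, 1/4, 0]

/-- Third partial derivatives `c_(αβγ) = ∂_α ∂_β ∂_γ F`. -/
noncomputable def c3 (α β γ : Fin 3) (x : Fin 3 → ℝ) : ℝ :=
  pd α (pd β (pd γ FF)) x

/-- Structure constants `c^γ_(αβ) = Σ_ε (η⁻¹)^(γε) c_(εαβ)`. -/
noncomputable def cUp (γ α β : Fin 3) (x : Fin 3 → ℝ) : ℝ :=
  ∑ ε, eta⁻¹ γ ε * c3 ε α β x


noncomputable def pr (i : Fin 3) : (Fin 3 → ℝ) →L[ℝ] ℝ := ContinuousLinearMap.proj i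

lemma fin3cases : ∀ i : Fin 3, i = 0 ∨ i = 1 ∨ i = 2 := by decide

lemma hco (i : Fin 3) (x : Fin 3 → ℝ) : HasFDerivAt (fun x : Fin 3 → ℝ => x i) (pr i) x :=
  (pr i).hasFDerivAt

lemma hinv (x : Fin 3 → ℝ) (hx : x 2 ≠ 0) :
    HasFDerivAt (fun x : Fin 3 → ℝ => (x 2)⁻¹)
      ((-ContinuousLinearMap.mulLeftRight ℝ ℝ (x 2)⁻¹ (x 2)⁻¹).comp (pr 2)) x :=
  (hasFDerivAt_inv' hx).comp x (hco 2 x)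

lemma pd_congr {f g : (Fin 3 → ℝ) → ℝ} (i : Fin 3) {x : Fin 3 → ℝ} (hx : x 2 ≠ 0)
    (h : ∀ y : Fin 3 → ℝ, y 2 ≠ 0 → f y = g y) : pd i f x = pd i g x := by
  unfold pd
  congr 1
  apply Filter.EventuallyEq.fderiv_eq
  have hU : IsOpen {y : Fin 3 → ℝ | y 2 ≠ 0} :=
    isOpen_compl_singleton.preimage (continuous_apply 2)
  exact Filter.eventuallyEq_of_mem (hU.mem_nhds hx) h

noncomputable def DD : Fin 3 → (Fin 3 → ℝ) → ℝ :=
  ![fun x => (1/4)*(x 0*x 0) + (1/4)*(x 1*x 2),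
    fun x => (1/4)*(x 0*x 2) + (1/2)*(x 1*x 1*(x 2)⁻¹),
    fun x => (1/4)*(x 0*x 1) + (1/192)*(x 2*x 2*x 2) - (1/6)*(x 1*x 1*x 1*((x 2)⁻¹*(x 2)⁻¹))]

noncomputable def EE : Fin 3 → Fin 3 → (Fin 3 → ℝ) → ℝ :=
  ![![fun x => (1/2)*x 0, fun x => (1/4)*x 2, fun x => (1/4)*x 1],
    ![fun x => (1/4)*x 2, fun x => x 1*(x 2)⁻¹,
      fun x => (1/4)*x 0 - (1/2)*(x 1*x 1*((x 2)⁻¹*(x 2)⁻¹))],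
    ![fun x => (1/4)*x 1,
      fun x => (1/4)*x 0 - (1/2)*(x 1*x 1*((x 2)⁻¹*(x 2)⁻¹)),
      fun x => (1/64)*(x 2*x 2) + (1/3)*(x 1*x 1*x 1*((x 2)⁻¹*(x 2)⁻¹*(x 2)⁻¹))]]

noncomputable def TT : Fin 3 → Fin 3 → Fin 3 → (Fin 3 → ℝ) → ℝ :=
  ![![![fun _ => 1/2, fun _ => 0, fun _ => 0],
     ![fun _ => 0, fun _ => 0, fun _ => 1/4],
     ![fun _ => 0, fun _ => 1/4, fun _ => 0]],
    ![![fun _ => 0, fun _ => 0, fun _ => 1/4],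
     ![fun _ => 0, fun x => (x 2)⁻¹, fun x => -(x 1)*((x 2)⁻¹*(x 2)⁻¹)],
     ![fun _ => 1/4, fun x => -(x 1)*((x 2)⁻¹*(x 2)⁻¹),
       fun x => x 1*x 1*((x 2)⁻¹*(x 2)⁻¹*(x 2)⁻¹)]],
    ![![fun _ => 0, fun _ => 1/4, fun _ => 0],
     ![fun _ => 1/4, fun x => -(x 1)*((x 2)⁻¹*(x 2)⁻¹),
       fun x => x 1*x 1*((x 2)⁻¹*(x 2)⁻¹*(x 2)⁻¹)],
     ![fun _ => 0, fun x => x 1*x 1*((x 2)⁻¹*(x 2)⁻¹*(x 2)⁻¹),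
       fun x => x 2/32 - x 1*x 1*x 1*((x 2)⁻¹*(x 2)⁻¹*(x 2)⁻¹*(x 2)⁻¹)]]]

lemma pdFF (γ : Fin 3) (x : Fin 3 → ℝ) (hx : x 2 ≠ 0) : pd γ FF x = DD γ x := by
  have hcg : pd γ FF x = pd γ (fun y : Fin 3 → ℝ =>
      (y 0 * ((1/12)*(y 0*y 0) + (1/4)*(y 1*y 2)) + (1/768)*(y 2*y 2*y 2*y 2))
        + (1/6)*(y 1*y 1*y 1*(y 2)⁻¹)) x := by
    refine pd_congr γ hx fun y hy => ?_
    unfold FF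
    field_simp
  rw [hcg]
  have h := (((hco 0 x).mul ((((hco 0 x).mul (hco 0 x)).const_mul (1/12 : ℝ)).add
      (((hco 1 x).mul (hco 2 x)).const_mul (1/4 : ℝ)))).add
      ((((hco 2 x).mul (hco 2 x)).mul (hco 2 x) |>.mul (hco 2 x)).const_mul (1/768 : ℝ))).add
      (((((hco 1 x).mul (hco 1 x)).mul (hco 1 x)).mul (hinv x hx)).const_mul (1/6 : ℝ))
  have h' : HasFDerivAt (fun y : Fin 3 → ℝ =>
      (y 0 * ((1/12)*(y 0*y 0) + (1/4)*(y 1*y 2)) + (1/768)*(y 2*y 2*y 2*y 2))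
        + (1/6)*(y 1*y 1*y 1*(y 2)⁻¹)) _ x := h
  rw [pd, h'.fderiv]
  rcases fin3cases γ with rfl | rfl | rfl <;>
  · simp only [DD, pr, ContinuousLinearMap.add_apply, ContinuousLinearMap.smul_apply,
      ContinuousLinearMap.coe_comp', Function.comp_apply, ContinuousLinearMap.neg_apply,
      ContinuousLinearMap.mulLeftRight_apply, ContinuousLinearMap.proj_apply,
      smul_eq_mul, Pi.single_apply, Matrix.cons_val_zero, Matrix.cons_val_one,
      Matrix.head_cons, Matrix.cons_val_two, Matrix.tail_cons, Fin.reduceEq]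
    norm_num
    all_goals try field_simp
    all_goals try ring

lemma pdDD (γ β : Fin 3) (x : Fin 3 → ℝ) (hx : x 2 ≠ 0) : pd β (DD γ) x = EE γ β x := by
  rcases fin3cases γ with rfl | rfl | rfl
  · have h := (((hco 0 x).mul (hco 0 x)).const_mul (1/4 : ℝ)).add
      (((hco 1 x).mul (hco 2 x)).const_mul (1/4 : ℝ))
    have h' : HasFDerivAt (DD 0) _ x := h
    rw [pd, h'.fderiv]
    rcases fin3cases β with rfl | rfl | rfl <;>
    · simp only [EE, pr, ContinuousLinearMap.add_apply, ContinuousLinearMap.smul_apply,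
        ContinuousLinearMap.proj_apply, smul_eq_mul, Pi.single_apply,
        Matrix.cons_val_zero, Matrix.cons_val_one, Matrix.head_cons,
        Matrix.cons_val_two, Matrix.tail_cons, Fin.reduceEq]
      norm_num
      all_goals try field_simp
      all_goals try ring
  · have h := (((hco 0 x).mul (hco 2 x)).const_mul (1/4 : ℝ)).add
      ((((hco 1 x).mul (hco 1 x)).mul (hinv x hx)).const_mul (1/2 : ℝ))
    have h' : HasFDerivAt (DD 1) _ x := h
    rw [pd, h'.fderiv]
    rcases fin3cases β with rfl | rfl | rfl <;>
    · simp only [EE, pr, ContinuousLinearMap.add_apply, ContinuousLinearMap.smul_apply,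
        ContinuousLinearMap.coe_comp', Function.comp_apply, ContinuousLinearMap.neg_apply,
        ContinuousLinearMap.mulLeftRight_apply, ContinuousLinearMap.proj_apply,
        smul_eq_mul, Pi.single_apply, Matrix.cons_val_zero, Matrix.cons_val_one,
        Matrix.head_cons, Matrix.cons_val_two, Matrix.tail_cons, Fin.reduceEq]
      norm_num
      all_goals try field_simp
      all_goals try ring
  · have h := ((((hco 0 x).mul (hco 1 x)).const_mul (1/4 : ℝ)).add
      ((((hco 2 x).mul (hco 2 x)).mul (hco 2 x)).const_mul (1/192 : ℝ))).sub
      (((((hco 1 x).mul (hco 1 x)).mul (hco 1 x)).mul ((hinv x hx).mul (hinv x hx))).const_mul (1/6 : ℝ))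
    have h' : HasFDerivAt (DD 2) _ x := h
    rw [pd, h'.fderiv]
    rcases fin3cases β with rfl | rfl | rfl <;>
    · simp only [EE, pr, ContinuousLinearMap.add_apply, ContinuousLinearMap.sub_apply,
        ContinuousLinearMap.smul_apply,
        ContinuousLinearMap.coe_comp', Function.comp_apply, ContinuousLinearMap.neg_apply,
        ContinuousLinearMap.mulLeftRight_apply, ContinuousLinearMap.proj_apply,
        smul_eq_mul, Pi.single_apply, Matrix.cons_val_zero, Matrix.cons_val_one,
        Matrix.head_cons, Matrix.cons_val_two, Matrix.tail_cons, Fin.reduceEq]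
      norm_num
      all_goals try field_simp
      all_goals try ring

lemma pdEE (γ β α : Fin 3) (x : Fin 3 → ℝ) (hx : x 2 ≠ 0) :
    pd α (EE γ β) x = TT γ β α x := by
  rcases fin3cases γ with rfl | rfl | rfl <;> rcases fin3cases β with rfl | rfl | rfl
  · have h := (hco 0 x).const_mul (1/2 : ℝ)
    have h' : HasFDerivAt (EE 0 0) _ x := h
    rw [pd, h'.fderiv]
    rcases fin3cases α with rfl | rfl | rfl <;>
    · simp only [TT, pr, ContinuousLinearMap.smul_apply, ContinuousLinearMap.proj_apply,
        smul_eq_mul, Pi.single_apply, Matrix.cons_val_zero, Matrix.cons_val_one,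
        Matrix.head_cons, Matrix.cons_val_two, Matrix.tail_cons, Fin.reduceEq]
      norm_num
      all_goals try field_simp
      all_goals try ring
  · have h := (hco 2 x).const_mul (1/4 : ℝ)
    have h' : HasFDerivAt (EE 0 1) _ x := h
    rw [pd, h'.fderiv]
    rcases fin3cases α with rfl | rfl | rfl <;>
    · simp only [TT, pr, ContinuousLinearMap.smul_apply, ContinuousLinearMap.proj_apply,
        smul_eq_mul, Pi.single_apply, Matrix.cons_val_zero, Matrix.cons_val_one,
        Matrix.head_cons, Matrix.cons_val_two, Matrix.tail_cons, Fin.reduceEq]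
      norm_num
      all_goals try field_simp
      all_goals try ring
  · have h := (hco 1 x).const_mul (1/4 : ℝ)
    have h' : HasFDerivAt (EE 0 2) _ x := h
    rw [pd, h'.fderiv]
    rcases fin3cases α with rfl | rfl | rfl <;>
    · simp only [TT, pr, ContinuousLinearMap.smul_apply, ContinuousLinearMap.proj_apply,
        smul_eq_mul, Pi.single_apply, Matrix.cons_val_zero, Matrix.cons_val_one,
        Matrix.head_cons, Matrix.cons_val_two, Matrix.tail_cons, Fin.reduceEq]
      norm_num
      all_goals try field_simp
      all_goals try ring
  · have h := (hco 2 x).const_mul (1/4 : ℝ)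
    have h' : HasFDerivAt (EE 1 0) _ x := h
    rw [pd, h'.fderiv]
    rcases fin3cases α with rfl | rfl | rfl <;>
    · simp only [TT, pr, ContinuousLinearMap.smul_apply, ContinuousLinearMap.proj_apply,
        smul_eq_mul, Pi.single_apply, Matrix.cons_val_zero, Matrix.cons_val_one,
        Matrix.head_cons, Matrix.cons_val_two, Matrix.tail_cons, Fin.reduceEq]
      norm_num
      all_goals try field_simp
      all_goals try ring
  · have h := (hco 1 x).mul (hinv x hx)
    have h' : HasFDerivAt (EE 1 1) _ x := h
    rw [pd, h'.fderiv]
    rcases fin3cases α with rfl | rfl | rfl <;>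
    · simp only [TT, pr, ContinuousLinearMap.add_apply, ContinuousLinearMap.smul_apply,
        ContinuousLinearMap.coe_comp', Function.comp_apply, ContinuousLinearMap.neg_apply,
        ContinuousLinearMap.mulLeftRight_apply, ContinuousLinearMap.proj_apply,
        smul_eq_mul, Pi.single_apply, Matrix.cons_val_zero, Matrix.cons_val_one,
        Matrix.head_cons, Matrix.cons_val_two, Matrix.tail_cons, Fin.reduceEq]
      norm_num
      all_goals try field_simp
      all_goals try ring
  · have h := ((hco 0 x).const_mul (1/4 : ℝ)).sub
      ((((hco 1 x).mul (hco 1 x)).mul ((hinv x hx).mul (hinv x hx))).const_mul (1/2 : ℝ))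
    have h' : HasFDerivAt (EE 1 2) _ x := h
    rw [pd, h'.fderiv]
    rcases fin3cases α with rfl | rfl | rfl <;>
    · simp only [TT, pr, ContinuousLinearMap.add_apply, ContinuousLinearMap.sub_apply,
        ContinuousLinearMap.smul_apply,
        ContinuousLinearMap.coe_comp', Function.comp_apply, ContinuousLinearMap.neg_apply,
        ContinuousLinearMap.mulLeftRight_apply, ContinuousLinearMap.proj_apply,
        smul_eq_mul, Pi.single_apply, Matrix.cons_val_zero, Matrix.cons_val_one,
        Matrix.head_cons, Matrix.cons_val_two, Matrix.tail_cons, Fin.reduceEq]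
      norm_num
      all_goals try field_simp
      all_goals try ring
  · have h := (hco 1 x).const_mul (1/4 : ℝ)
    have h' : HasFDerivAt (EE 2 0) _ x := h
    rw [pd, h'.fderiv]
    rcases fin3cases α with rfl | rfl | rfl <;>
    · simp only [TT, pr, ContinuousLinearMap.smul_apply, ContinuousLinearMap.proj_apply,
        smul_eq_mul, Pi.single_apply, Matrix.cons_val_zero, Matrix.cons_val_one,
        Matrix.head_cons, Matrix.cons_val_two, Matrix.tail_cons, Fin.reduceEq]
      norm_num
      all_goals try field_simp
      all_goals try ring
  · have h := ((hco 0 x).const_mul (1/4 : ℝ)).sub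
      ((((hco 1 x).mul (hco 1 x)).mul ((hinv x hx).mul (hinv x hx))).const_mul (1/2 : ℝ))
    have h' : HasFDerivAt (EE 2 1) _ x := h
    rw [pd, h'.fderiv]
    rcases fin3cases α with rfl | rfl | rfl <;>
    · simp only [TT, pr, ContinuousLinearMap.add_apply, ContinuousLinearMap.sub_apply,
        ContinuousLinearMap.smul_apply,
        ContinuousLinearMap.coe_comp', Function.comp_apply, ContinuousLinearMap.neg_apply,
        ContinuousLinearMap.mulLeftRight_apply, ContinuousLinearMap.proj_apply,
        smul_eq_mul, Pi.single_apply, Matrix.cons_val_zero, Matrix.cons_val_one,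
        Matrix.head_cons, Matrix.cons_val_two, Matrix.tail_cons, Fin.reduceEq]
      norm_num
      all_goals try field_simp
      all_goals try ring
  · have h := (((hco 2 x).mul (hco 2 x)).const_mul (1/64 : ℝ)).add
      (((((hco 1 x).mul (hco 1 x)).mul (hco 1 x)).mul
        (((hinv x hx).mul (hinv x hx)).mul (hinv x hx))).const_mul (1/3 : ℝ))
    have h' : HasFDerivAt (EE 2 2) _ x := h
    rw [pd, h'.fderiv]
    rcases fin3cases α with rfl | rfl | rfl <;>
    · simp only [TT, pr, ContinuousLinearMap.add_apply, ContinuousLinearMap.sub_apply,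
        ContinuousLinearMap.smul_apply,
        ContinuousLinearMap.coe_comp', Function.comp_apply, ContinuousLinearMap.neg_apply,
        ContinuousLinearMap.mulLeftRight_apply, ContinuousLinearMap.proj_apply,
        smul_eq_mul, Pi.single_apply, Matrix.cons_val_zero, Matrix.cons_val_one,
        Matrix.head_cons, Matrix.cons_val_two, Matrix.tail_cons, Fin.reduceEq]
      norm_num
      all_goals try field_simp
      all_goals try ring

lemma c3_eq (α β γ : Fin 3) (x : Fin 3 → ℝ) (hx : x 2 ≠ 0) : c3 α β γ x = TT γ β α x := by
  unfold c3
  have h1 : ∀ y : Fin 3 → ℝ, y 2 ≠ 0 → pd β (pd γ FF) y = EE γ β y := fun y hy =>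
    (pd_congr β hy (pdFF γ)).trans (pdDD γ β y hy)
  rw [pd_congr α hx h1, pdEE γ β α x hx]

lemma etaInv : eta⁻¹ = !![2, 0, 0; 0, 0, 4; 0, 4, 0] := by
  apply Matrix.inv_eq_right_inv
  ext i j
  fin_cases i <;> fin_cases j <;>
    simp [eta, Matrix.mul_apply, Fin.sum_univ_three, Matrix.one_apply, Matrix.vecHead, Matrix.vecTail] <;> norm_num

lemma etaDet : IsUnit eta.det := by
  have : eta.det = -(1/32) := by
    simp [eta, Matrix.det_fin_three]
    norm_num
  rw [this]
  norm_num

noncomputable def CV (g a b : Fin 3) (x : Fin 3 → ℝ) : ℝ :=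
  ![(2:ℝ) * TT b a 0 x, 4 * TT b a 2 x, 4 * TT b a 1 x] g

lemma cUp_eq (g a b : Fin 3) (x : Fin 3 → ℝ) (hx : x 2 ≠ 0) : cUp g a b x = CV g a b x := by
  unfold cUp
  rw [etaInv, Fin.sum_univ_three, c3_eq 0 a b x hx, c3_eq 1 a b x hx, c3_eq 2 a b x hx]
  rcases fin3cases g with rfl | rfl | rfl <;>
    simp [CV, Matrix.vecHead, Matrix.vecTail] <;> ring

lemma cv000 (x : Fin 3 → ℝ) : CV 0 0 0 x = (1:ℝ) := by
  simp [CV, TT, Matrix.vecHead, Matrix.vecTail]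
  all_goals try ring

lemma cv001 (x : Fin 3 → ℝ) : CV 0 0 1 x = (0:ℝ) := by
  simp [CV, TT, Matrix.vecHead, Matrix.vecTail]
  all_goals try ring

lemma cv002 (x : Fin 3 → ℝ) : CV 0 0 2 x = (0:ℝ) := by
  simp [CV, TT, Matrix.vecHead, Matrix.vecTail]
  all_goals try ring

lemma cv010 (x : Fin 3 → ℝ) : CV 0 1 0 x = (0:ℝ) := by
  simp [CV, TT, Matrix.vecHead, Matrix.vecTail]
  all_goals try ring

lemma cv011 (x : Fin 3 → ℝ) : CV 0 1 1 x = (0:ℝ) := by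
  simp [CV, TT, Matrix.vecHead, Matrix.vecTail]
  all_goals try ring

lemma cv012 (x : Fin 3 → ℝ) : CV 0 1 2 x = (1:ℝ)/2 := by
  simp [CV, TT, Matrix.vecHead, Matrix.vecTail]
  all_goals try ring

lemma cv020 (x : Fin 3 → ℝ) : CV 0 2 0 x = (0:ℝ) := by
  simp [CV, TT, Matrix.vecHead, Matrix.vecTail]
  all_goals try ring

lemma cv021 (x : Fin 3 → ℝ) : CV 0 2 1 x = (1:ℝ)/2 := by
  simp [CV, TT, Matrix.vecHead, Matrix.vecTail]
  all_goals try ring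

lemma cv022 (x : Fin 3 → ℝ) : CV 0 2 2 x = (0:ℝ) := by
  simp [CV, TT, Matrix.vecHead, Matrix.vecTail]
  all_goals try ring

lemma cv100 (x : Fin 3 → ℝ) : CV 1 0 0 x = (0:ℝ) := by
  simp [CV, TT, Matrix.vecHead, Matrix.vecTail]
  all_goals try ring

lemma cv101 (x : Fin 3 → ℝ) : CV 1 0 1 x = (1:ℝ) := by
  simp [CV, TT, Matrix.vecHead, Matrix.vecTail]
  all_goals try ring

lemma cv102 (x : Fin 3 → ℝ) : CV 1 0 2 x = (0:ℝ) := by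
  simp [CV, TT, Matrix.vecHead, Matrix.vecTail]
  all_goals try ring

lemma cv110 (x : Fin 3 → ℝ) : CV 1 1 0 x = (1:ℝ) := by
  simp [CV, TT, Matrix.vecHead, Matrix.vecTail]
  all_goals try ring

lemma cv111 (x : Fin 3 → ℝ) : CV 1 1 1 x = -(4*x 1)*((x 2)⁻¹*(x 2)⁻¹) := by
  simp [CV, TT, Matrix.vecHead, Matrix.vecTail]
  all_goals try ring

lemma cv112 (x : Fin 3 → ℝ) : CV 1 1 2 x = 4*(x 1*x 1)*((x 2)⁻¹*(x 2)⁻¹*(x 2)⁻¹) := by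
  simp [CV, TT, Matrix.vecHead, Matrix.vecTail]
  all_goals try ring

lemma cv120 (x : Fin 3 → ℝ) : CV 1 2 0 x = (0:ℝ) := by
  simp [CV, TT, Matrix.vecHead, Matrix.vecTail]
  all_goals try ring

lemma cv121 (x : Fin 3 → ℝ) : CV 1 2 1 x = 4*(x 1*x 1)*((x 2)⁻¹*(x 2)⁻¹*(x 2)⁻¹) := by
  simp [CV, TT, Matrix.vecHead, Matrix.vecTail]
  all_goals try ring

lemma cv122 (x : Fin 3 → ℝ) : CV 1 2 2 x = x 2/8 - 4*(x 1*x 1*x 1)*((x 2)⁻¹*(x 2)⁻¹*(x 2)⁻¹*(x 2)⁻¹) := by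
  simp [CV, TT, Matrix.vecHead, Matrix.vecTail]
  all_goals try ring

lemma cv200 (x : Fin 3 → ℝ) : CV 2 0 0 x = (0:ℝ) := by
  simp [CV, TT, Matrix.vecHead, Matrix.vecTail]
  all_goals try ring

lemma cv201 (x : Fin 3 → ℝ) : CV 2 0 1 x = (0:ℝ) := by
  simp [CV, TT, Matrix.vecHead, Matrix.vecTail]
  all_goals try ring

lemma cv202 (x : Fin 3 → ℝ) : CV 2 0 2 x = (1:ℝ) := by
  simp [CV, TT, Matrix.vecHead, Matrix.vecTail]
  all_goals try ring

lemma cv210 (x : Fin 3 → ℝ) : CV 2 1 0 x = (0:ℝ) := by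
  simp [CV, TT, Matrix.vecHead, Matrix.vecTail]
  all_goals try ring

lemma cv211 (x : Fin 3 → ℝ) : CV 2 1 1 x = 4*((x 2)⁻¹) := by
  simp [CV, TT, Matrix.vecHead, Matrix.vecTail]
  all_goals try ring

lemma cv212 (x : Fin 3 → ℝ) : CV 2 1 2 x = -(4*x 1)*((x 2)⁻¹*(x 2)⁻¹) := by
  simp [CV, TT, Matrix.vecHead, Matrix.vecTail]
  all_goals try ring

lemma cv220 (x : Fin 3 → ℝ) : CV 2 2 0 x = (1:ℝ) := by
  simp [CV, TT, Matrix.vecHead, Matrix.vecTail]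
  all_goals try ring

lemma cv221 (x : Fin 3 → ℝ) : CV 2 2 1 x = -(4*x 1)*((x 2)⁻¹*(x 2)⁻¹) := by
  simp [CV, TT, Matrix.vecHead, Matrix.vecTail]
  all_goals try ring

lemma cv222 (x : Fin 3 → ℝ) : CV 2 2 2 x = 4*(x 1*x 1)*((x 2)⁻¹*(x 2)⁻¹*(x 2)⁻¹) := by
  simp [CV, TT, Matrix.vecHead, Matrix.vecTail]
  all_goals try ring

theorem stmt_3 :
    (∀ (α β : Fin 3) (x : Fin 3 → ℝ), (_ : x 2 ≠ 0) → c3 0 α β x = eta α β) ∧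
    IsUnit eta.det ∧
    (∀ (α β γ σ : Fin 3) (x : Fin 3 → ℝ), (_ : x 2 ≠ 0) → 
      ∑ ε, cUp ε α β x * cUp σ ε γ x = ∑ ε, cUp ε α γ x * cUp σ ε β x) := by
  refine ⟨?_, etaDet, ?_⟩
  · intro α β x hx
    rw [c3_eq 0 α β x hx]
    rcases fin3cases α with rfl | rfl | rfl <;>
    rcases fin3cases β with rfl | rfl | rfl <;>
    · simp [TT, eta, Matrix.vecHead, Matrix.vecTail]
      all_goals try norm_num
  · intro α β γ σ x hx
    rw [Fin.sum_univ_three, Fin.sum_univ_three]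
    rw [cUp_eq _ _ _ x hx, cUp_eq _ _ _ x hx, cUp_eq _ _ _ x hx, cUp_eq _ _ _ x hx,
      cUp_eq _ _ _ x hx, cUp_eq _ _ _ x hx, cUp_eq _ _ _ x hx, cUp_eq _ _ _ x hx,
      cUp_eq _ _ _ x hx, cUp_eq _ _ _ x hx, cUp_eq _ _ _ x hx, cUp_eq _ _ _ x hx]
    rcases fin3cases α with rfl | rfl | rfl <;>
    rcases fin3cases β with rfl | rfl | rfl <;>
    rcases fin3cases γ with rfl | rfl | rfl <;>
    rcases fin3cases σ with rfl | rfl | rfl <;>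
    · simp only [cv000, cv001, cv002, cv010, cv011, cv012, cv020, cv021, cv022, cv100, cv101, cv102, cv110, cv111, cv112, cv120, cv121, cv122, cv200, cv201, cv202, cv210, cv211, cv212, cv220, cv221, cv222]
      all_goals try field_simp
      all_goals try ring
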